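/- For every natural number n and all integers t and m, 5·∑_{j=1}^n (−F_{m−3})^{n−j}·(F_{m+2})^j·G_{j+t−1}·G_{j+t}·G_{j+t+1}·G_{j+t+2}·G_{j+t+m} = F_{m+2}^{n+1}·G_{n+t−1}·G_{n+t}·G_{n+t+1}·G_{n+t+2}·G_{n+t+3} − (−1)^n·F_{m−3}^n·F_{m+2}·G_{t−1}·G_t·G_{t+1}·G_{t+2}·G_{t+3}. -/

import Mathlib

theorem weighted_sum_products_lambda_free (F : ℤ → ℤ) (hF0 : F 0 = 0) (hF1 : F 1 = 1)
    (hF : ∀ k : ℤ, F (k + 2) = F (k + 1) + F k)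
    (G : ℤ → ℤ) (hG : ∀ k : ℤ, G (k + 2) = G (k + 1) + G k) (n : ℕ) (t m : ℤ) :
    5 * ∑ j ∈ Finset.Icc 1 n,
        (-F (m - 3)) ^ (n - j) * F (m + 2) ^ j *
          (G ((j : ℤ) + t - 1) * G ((j : ℤ) + t) * G ((j : ℤ) + t + 1) * G ((j : ℤ) + t + 2) *
            G ((j : ℤ) + t + m)) =
      F (m + 2) ^ (n + 1) *
          (G ((n : ℤ) + t - 1) * G ((n : ℤ) + t) * G ((n : ℤ) + t + 1) * G ((n : ℤ) + t + 2) *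
            G ((n : ℤ) + t + 3)) -
        (-1 : ℤ) ^ n * F (m - 3) ^ n * F (m + 2) *
          (G (t - 1) * G t * G (t + 1) * G (t + 2) * G (t + 3)) := by
  -- key identity: 5 * G (k + m) = F (m+2) * G (k+3) + F (m-3) * G (k-2)
  have key : ∀ m : ℤ,
      (∀ k : ℤ, 5 * G (k + m) = F (m + 2) * G (k + 3) + F (m - 3) * G (k - 2)) ∧
      (∀ k : ℤ, 5 * G (k + m + 1) = F (m + 3) * G (k + 3) + F (m - 2) * G (k - 2)) := by
    intro m
    induction m using Int.induction_on with
    | zero =>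
      have h2 : F 2 = 1 := by have h := hF 0; norm_num [hF0, hF1] at h; linarith
      have hm1 : F (-1) = 1 := by have h := hF (-1); norm_num [hF0, hF1] at h; linarith
      have hm2 : F (-2) = -1 := by have h := hF (-2); norm_num [hF0, hm1] at h; linarith
      have hm3 : F (-3) = 2 := by have h := hF (-3); norm_num [hm1, hm2] at h; linarith
      have h3 : F 3 = 2 := by have h := hF 1; norm_num [hF1, h2] at h; linarith
      constructor <;> intro k <;>
      · have g1 := hG k
        have g2 := hG (k + 1)
        have g3 := hG (k - 2)
        have g4 := hG (k - 1)
        ring_nf at g1 g2 g3 g4 ⊢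
        simp only [h2, hm3, h3, hm2]
        linarith
    | succ i ih =>
      refine ⟨?_, ?_⟩
      · intro k
        have h := ih.2 k
        ring_nf at h ⊢
        linear_combination h
      · intro k
        have h1 := ih.1 k
        have h2 := ih.2 k
        have hg := hG (k + i)
        have f1 := hF (i + 2)
        have f2 := hF (i - 3)
        ring_nf at h1 h2 hg f1 f2 ⊢
        linear_combination 5 * hg + h1 + h2 - G (3 + k) * f1 - G (-2 + k) * f2
    | pred i ih =>
      have snd : ∀ k : ℤ, 5 * G (k + (-i - 1) + 1) =
          F (-i - 1 + 3) * G (k + 3) + F (-i - 1 - 2) * G (k - 2) := by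
        intro k
        have h := ih.1 k
        ring_nf at h ⊢
        linear_combination h
      refine ⟨?_, snd⟩
      intro k
      have h1 := ih.1 k
      have h2 := ih.2 k
      have hg := hG (k + (-i - 1))
      have f1 := hF (1 - i)
      have f2 := hF (-i - 4)
      ring_nf at h1 h2 hg f1 f2 ⊢
      linear_combination -5 * hg + h2 - h1 + G (3 + k) * f1 + G (-2 + k) * f2
  induction n with
  | zero => simp
  | succ n ih =>
    rw [Finset.sum_Icc_succ_top (by omega : (1:ℕ) ≤ n + 1)]
    have hsum : ∑ j ∈ Finset.Icc 1 n,
        (-F (m - 3)) ^ (n + 1 - j) * F (m + 2) ^ j *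
          (G ((j : ℤ) + t - 1) * G ((j : ℤ) + t) * G ((j : ℤ) + t + 1) * G ((j : ℤ) + t + 2) *
            G ((j : ℤ) + t + m)) =
        (-F (m - 3)) * ∑ j ∈ Finset.Icc 1 n,
        (-F (m - 3)) ^ (n - j) * F (m + 2) ^ j *
          (G ((j : ℤ) + t - 1) * G ((j : ℤ) + t) * G ((j : ℤ) + t + 1) * G ((j : ℤ) + t + 2) *
            G ((j : ℤ) + t + m)) := by
      rw [Finset.mul_sum]
      refine Finset.sum_congr rfl ?_
      intro j hj
      simp only [Finset.mem_Icc] at hj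
      have : n + 1 - j = (n - j) + 1 := by omega
      rw [this, pow_succ]
      ring
    rw [hsum]
    have hk := (key m).1 ((n : ℤ) + 1 + t)
    push_cast
    simp only [Nat.sub_self, pow_zero,
      show (n : ℤ) + 1 + t = (n : ℤ) + t + 1 from by ring] at hk ⊢
    simp only [show (n : ℤ) + t + 1 - 1 = (n : ℤ) + t from by ring,
      show (n : ℤ) + t + 1 + 1 = (n : ℤ) + t + 2 from by ring,
      show (n : ℤ) + t + 1 + 2 = (n : ℤ) + t + 3 from by ring,
      show (n : ℤ) + t + 1 + 3 = (n : ℤ) + t + 4 from by ring,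
      show (n : ℤ) + t + 1 - 2 = (n : ℤ) + t - 1 from by ring] at hk ⊢
    linear_combination (-F (m - 3)) * ih +
      (F (m + 2) ^ (n + 1) * (G ((n : ℤ) + t) * G ((n : ℤ) + t + 1) *
        G ((n : ℤ) + t + 2) * G ((n : ℤ) + t + 3))) * hk
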